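/- Let Θ : ℝ¹⁰ → ℝ be a smooth function of (x¹,…,x⁵,y¹,…,y⁵) and set ω_{ik} = Θ_{x^i y^k} − Θ_{x^k y^i} for i,k = 1,…,5. Define H^p = Σ_{i,k,l,m=1}^{5} ε^{iklmp} ω_{ik} ω_{lm} for p = 1,…,5, where ε^{iklmp} is the Levi-Civita symbol on five indices. Then the conservation identities Σ_{p=1}^{5} ∂_{x^p} H^p = 0 and Σ_{p=1}^{5} ∂_{y^p} H^p = 0 hold at every point of ℝ¹⁰. -/

import Mathlib

noncomputable section

/-- Partial derivative of `f : ℝⁿ → ℝ` in the `i`-th coordinate direction. -/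
def pd {n : ℕ} (i : Fin n) (f : (Fin n → ℝ) → ℝ) : (Fin n → ℝ) → ℝ :=
  fun p => fderiv ℝ f p (Pi.single i 1)

/-- `∂/∂x^i` on functions of `(x¹,…,x⁵,y¹,…,y⁵) ∈ ℝ¹⁰`. -/
def px5 (i : Fin 5) (f : (Fin 10 → ℝ) → ℝ) : (Fin 10 → ℝ) → ℝ :=
  pd ⟨i.val, by omega⟩ f

/-- `∂/∂y^i` on functions of `(x¹,…,x⁵,y¹,…,y⁵) ∈ ℝ¹⁰`. -/
def py5 (i : Fin 5) (f : (Fin 10 → ℝ) → ℝ) : (Fin 10 → ℝ) → ℝ :=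
  pd ⟨i.val + 5, by omega⟩ f

/-- Levi-Civita symbol on indices `1,…,5`. -/
def eps5 (i k l m p : Fin 5) : ℝ :=
  Matrix.det (Matrix.of fun r c : Fin 5 => if (![i, k, l, m, p]) r = c then (1 : ℝ) else 0)

/-- `ω_{ik} = Θ_{x^i y^k} − Θ_{x^k y^i}`. -/
def omg5 (Θ : (Fin 10 → ℝ) → ℝ) (i k : Fin 5) : (Fin 10 → ℝ) → ℝ :=
  fun p => px5 i (py5 k Θ) p - px5 k (py5 i Θ) p

/-- `H^p = Σ_{i,k,l,m} ε^{iklmp} ω_{ik} ω_{lm}`. -/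
def Hfun (Θ : (Fin 10 → ℝ) → ℝ) (p : Fin 5) : (Fin 10 → ℝ) → ℝ :=
  fun pt => ∑ i, ∑ k, ∑ l, ∑ m, eps5 i k l m p * omg5 Θ i k pt * omg5 Θ l m pt

/-! ### Auxiliary analysis lemmas -/

set_option maxRecDepth 8000

lemma pd_smooth {n : ℕ} (i : Fin n) {f : (Fin n → ℝ) → ℝ} (hf : ContDiff ℝ (⊤ : ℕ∞) f) :
    ContDiff ℝ (⊤ : ℕ∞) (pd i f) := by
  have h1 : ContDiff ℝ (⊤ : ℕ∞) (fderiv ℝ f) := hf.fderiv_right (by exact_mod_cast le_top)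
  exact (ContinuousLinearMap.apply ℝ ℝ (Pi.single i 1)).contDiff.comp h1

lemma dAt {n : ℕ} {f : (Fin n → ℝ) → ℝ} (hf : ContDiff ℝ (⊤ : ℕ∞) f) (pt : Fin n → ℝ) :
    DifferentiableAt ℝ f pt :=
  (hf.differentiable (by simp) pt)

lemma pd_sub {n : ℕ} (i : Fin n) {f g : (Fin n → ℝ) → ℝ} {pt : Fin n → ℝ}
    (hf : DifferentiableAt ℝ f pt) (hg : DifferentiableAt ℝ g pt) :
    pd i (fun q => f q - g q) pt = pd i f pt - pd i g pt := by
  simp [pd, fderiv_fun_sub hf hg]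

lemma pd_mul {n : ℕ} (i : Fin n) {f g : (Fin n → ℝ) → ℝ} {pt : Fin n → ℝ}
    (hf : DifferentiableAt ℝ f pt) (hg : DifferentiableAt ℝ g pt) :
    pd i (fun q => f q * g q) pt = pd i f pt * g pt + f pt * pd i g pt := by
  simp [pd, fderiv_fun_mul hf hg]; ring

lemma pd_const_mul {n : ℕ} (i : Fin n) (c : ℝ) {f : (Fin n → ℝ) → ℝ} {pt : Fin n → ℝ}
    (hf : DifferentiableAt ℝ f pt) :
    pd i (fun q => c * f q) pt = c * pd i f pt := by
  simp [pd, fderiv_const_mul hf c]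

lemma pd_sum {n : ℕ} {ι : Type*} [Fintype ι] (a : Fin n) (F : ι → (Fin n → ℝ) → ℝ)
    {pt : Fin n → ℝ} (hF : ∀ j, DifferentiableAt ℝ (F j) pt) :
    pd a (fun q => ∑ j, F j q) pt = ∑ j, pd a (F j) pt := by
  simp [pd, fderiv_fun_sum (fun j _ => hF j)]

lemma pd_comm {n : ℕ} (a b : Fin n) {f : (Fin n → ℝ) → ℝ} (hf : ContDiff ℝ (⊤ : ℕ∞) f)
    (pt : Fin n → ℝ) : pd a (pd b f) pt = pd b (pd a f) pt := by
  have hd : ∀ y, HasFDerivAt f (fderiv ℝ f y) y := fun y =>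
    (hf.differentiable (by simp) y).hasFDerivAt
  have h2 : ContDiff ℝ (⊤ : ℕ∞) (fderiv ℝ f) := hf.fderiv_right (by exact_mod_cast le_top)
  have hx : HasFDerivAt (fderiv ℝ f) (fderiv ℝ (fderiv ℝ f) pt) pt :=
    (h2.differentiable (by simp) pt).hasFDerivAt
  have hsymm := second_derivative_symmetric hd hx (Pi.single a 1) (Pi.single b 1)
  have hcomp : ∀ (c : Fin n) (v : Fin n → ℝ), pd c (fun q => fderiv ℝ f q v) pt
      = fderiv ℝ (fderiv ℝ f) pt (Pi.single c 1) v := by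
    intro c v
    have h3 : HasFDerivAt (fun q => fderiv ℝ f q v)
        ((ContinuousLinearMap.apply ℝ ℝ v).comp (fderiv ℝ (fderiv ℝ f) pt)) pt :=
      (ContinuousLinearMap.apply ℝ ℝ v).hasFDerivAt.comp pt hx
    simp [pd, h3.fderiv]
  show pd a (fun q => fderiv ℝ f q (Pi.single b 1)) pt
      = pd b (fun q => fderiv ℝ f q (Pi.single a 1)) pt
  rw [hcomp a (Pi.single b 1), hcomp b (Pi.single a 1)]
  exact hsymm

/-! ### Levi-Civita symmetries -/

def epsV (v : Fin 5 → Fin 5) : ℝ :=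
  Matrix.det (Matrix.of fun r c : Fin 5 => if v r = c then (1 : ℝ) else 0)

lemma epsV_perm (σ : Equiv.Perm (Fin 5)) (v : Fin 5 → Fin 5) :
    epsV (fun r => v (σ r)) = (Equiv.Perm.sign σ : ℤ) * epsV v := by
  have h : (Matrix.of fun r c : Fin 5 => if v (σ r) = c then (1 : ℝ) else 0)
      = (Matrix.of fun r c : Fin 5 => if v r = c then (1 : ℝ) else 0).submatrix σ id := rfl
  rw [epsV, h, Matrix.det_permute]
  rfl

lemma eps_cyc1 (i k l m p : Fin 5) : eps5 k p l m i = eps5 i k l m p := by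
  have hv : ![k, p, l, m, i]
      = fun r => (![i,k,l,m,p]) (((Equiv.swap (1:Fin 5) 4).trans (Equiv.swap 0 1)) r) := by
    funext r; fin_cases r <;> simp [Equiv.swap_apply_def]
  have h : eps5 k p l m i = epsV ![k, p, l, m, i] := rfl
  rw [h, hv, epsV_perm]
  have hs : Equiv.Perm.sign ((Equiv.swap (1:Fin 5) 4).trans (Equiv.swap 0 1)) = 1 := by decide
  rw [hs]; norm_num; rfl

lemma eps_cyc2 (i k l m p : Fin 5) : eps5 p i l m k = eps5 i k l m p := by
  have hv : ![p, i, l, m, k]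
      = fun r => (![i,k,l,m,p]) (((Equiv.swap (0:Fin 5) 4).trans (Equiv.swap 0 1)) r) := by
    funext r; fin_cases r <;> simp [Equiv.swap_apply_def]
  have h : eps5 p i l m k = epsV ![p, i, l, m, k] := rfl
  rw [h, hv, epsV_perm]
  have hs : Equiv.Perm.sign ((Equiv.swap (0:Fin 5) 4).trans (Equiv.swap 0 1)) = 1 := by decide
  rw [hs]; norm_num; rfl

lemma eps_pair (i k l m p : Fin 5) : eps5 l m i k p = eps5 i k l m p := by
  have hv : ![l, m, i, k, p]
      = fun r => (![i,k,l,m,p]) (((Equiv.swap (0:Fin 5) 2).trans (Equiv.swap 1 3)) r) := by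
    funext r; fin_cases r <;> simp [Equiv.swap_apply_def]
  have h : eps5 l m i k p = epsV ![l, m, i, k, p] := rfl
  rw [h, hv, epsV_perm]
  have hs : Equiv.Perm.sign ((Equiv.swap (0:Fin 5) 2).trans (Equiv.swap 1 3)) = 1 := by decide
  rw [hs]; norm_num; rfl

/-! ### The key algebraic identity -/

abbrev T5 := Fin 5 × Fin 5 × Fin 5 × Fin 5 × Fin 5

def rotA : T5 ≃ T5 where
  toFun x := (x.2.1, x.2.2.1, x.1, x.2.2.2.1, x.2.2.2.2)
  invFun x := (x.2.2.1, x.1, x.2.1, x.2.2.2.1, x.2.2.2.2)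
  left_inv _ := rfl
  right_inv _ := rfl

def rotB : T5 ≃ T5 where
  toFun x := (x.2.2.1, x.1, x.2.1, x.2.2.2.1, x.2.2.2.2)
  invFun x := (x.2.1, x.2.2.1, x.1, x.2.2.2.1, x.2.2.2.2)
  left_inv _ := rfl
  right_inv _ := rfl

def swC : T5 ≃ T5 where
  toFun x := (x.1, x.2.2.2.1, x.2.2.2.2, x.2.1, x.2.2.1)
  invFun x := (x.1, x.2.2.2.1, x.2.2.2.2, x.2.1, x.2.2.1)
  left_inv _ := rfl
  right_inv _ := rfl

def Xc (i : Fin 5) : Fin 10 := ⟨i.val, by omega⟩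
def Yc (i : Fin 5) : Fin 10 := ⟨i.val + 5, by omega⟩

lemma key5 (w : Fin 5 → Fin 5 → ℝ) (c : Fin 5 → Fin 5 → Fin 5 → ℝ)
    (hc : ∀ p i k, c p i k + c i k p + c k p i = 0) :
    ∑ p : Fin 5, ∑ i : Fin 5, ∑ k : Fin 5, ∑ l : Fin 5, ∑ m : Fin 5,
      eps5 i k l m p * (c p i k * w l m + w i k * c p l m) = 0 := by
  classical
  set G : T5 → ℝ := fun x => eps5 x.2.1 x.2.2.1 x.2.2.2.1 x.2.2.2.2 x.1
      * c x.1 x.2.1 x.2.2.1 * w x.2.2.2.1 x.2.2.2.2 with hG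
  have hnest : ∀ F : T5 → ℝ, (∑ x : T5, F x)
      = ∑ p : Fin 5, ∑ i : Fin 5, ∑ k : Fin 5, ∑ l : Fin 5, ∑ m : Fin 5, F (p,i,k,l,m) := by
    intro F
    rw [Fintype.sum_prod_type]
    refine Finset.sum_congr rfl fun p _ => ?_
    rw [Fintype.sum_prod_type]
    refine Finset.sum_congr rfl fun i _ => ?_
    rw [Fintype.sum_prod_type]
    refine Finset.sum_congr rfl fun k _ => ?_
    rw [Fintype.sum_prod_type]
  have hA : (∑ x : T5, G (rotA x)) = ∑ x : T5, G x := Equiv.sum_comp rotA G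
  have hB : (∑ x : T5, G (rotB x)) = ∑ x : T5, G x := Equiv.sum_comp rotB G
  have hC : (∑ x : T5, G (swC x)) = ∑ x : T5, G x := Equiv.sum_comp swC G
  have h0 := hnest (fun x : T5 => eps5 x.2.1 x.2.2.1 x.2.2.2.1 x.2.2.2.2 x.1
      * (c x.1 x.2.1 x.2.2.1 * w x.2.2.2.1 x.2.2.2.2
        + w x.2.1 x.2.2.1 * c x.1 x.2.2.2.1 x.2.2.2.2))
  beta_reduce at h0
  simp only at h0
  rw [← h0]
  have hsplit : (∑ x : T5, (fun x : T5 => eps5 x.2.1 x.2.2.1 x.2.2.2.1 x.2.2.2.2 x.1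
        * (c x.1 x.2.1 x.2.2.1 * w x.2.2.2.1 x.2.2.2.2
          + w x.2.1 x.2.2.1 * c x.1 x.2.2.2.1 x.2.2.2.2)) x)
      = (∑ x : T5, G x) + ∑ x : T5, G (swC x) := by
    rw [← Finset.sum_add_distrib]
    refine Finset.sum_congr rfl fun x _ => ?_
    obtain ⟨p, i, k, l, m⟩ := x
    simp only [hG, rotA, swC, Equiv.coe_fn_mk]
    rw [eps_pair l m i k p]
    ring
  rw [hsplit, hC]
  have h3 : (∑ x : T5, G x) + (∑ x : T5, G x) + (∑ x : T5, G x) = 0 := by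
    nth_rewrite 3 [← hB]
    nth_rewrite 2 [← hA]
    rw [← Finset.sum_add_distrib, ← Finset.sum_add_distrib]
    apply Finset.sum_eq_zero
    intro x _
    obtain ⟨p, i, k, l, m⟩ := x
    simp only [hG, rotA, rotB, swC, Equiv.coe_fn_mk]
    rw [eps_cyc1 i k l m p, eps_cyc2 i k l m p]
    linear_combination eps5 i k l m p * w l m * hc p i k
  have h4 : (∑ x : T5, G x) = 0 := by linarith
  rw [h4]; ring

/-- the conservation identities `Σ_p ∂_{x^p} H^p = 0` and
`Σ_p ∂_{y^p} H^p = 0` hold at every point of `ℝ¹⁰`. -/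
theorem stmt9 (Θ : (Fin 10 → ℝ) → ℝ) (hΘ : ContDiff ℝ (⊤ : ℕ∞) Θ) :
    ∀ pt : Fin 10 → ℝ,
      (∑ p : Fin 5, px5 p (Hfun Θ p) pt = 0) ∧
      (∑ p : Fin 5, py5 p (Hfun Θ p) pt = 0) := by
  intro pt
  have hY : ∀ k : Fin 5, ContDiff ℝ (⊤ : ℕ∞) (py5 k Θ) := fun k => pd_smooth _ hΘ
  have hXY : ∀ i k : Fin 5, ContDiff ℝ (⊤ : ℕ∞) (px5 i (py5 k Θ)) :=
    fun i k => pd_smooth _ (hY k)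
  have hω : ∀ i k : Fin 5, ContDiff ℝ (⊤ : ℕ∞) (omg5 Θ i k) :=
    fun i k => (hXY i k).sub (hXY k i)
  -- derivative of H in an arbitrary direction
  have hderivH : ∀ (a : Fin 10) (p : Fin 5) (q : Fin 10 → ℝ),
      pd a (Hfun Θ p) q = ∑ i, ∑ k, ∑ l, ∑ m, eps5 i k l m p *
        (pd a (omg5 Θ i k) q * omg5 Θ l m q + omg5 Θ i k q * pd a (omg5 Θ l m) q) := by
    intro a p q
    have hterm : ∀ i k l m : Fin 5,
        ContDiff ℝ (⊤ : ℕ∞) (fun q => eps5 i k l m p * omg5 Θ i k q * omg5 Θ l m q) :=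
      fun i k l m => (contDiff_const.mul (hω i k)).mul (hω l m)
    have hs3 : ∀ i k l : Fin 5, ContDiff ℝ (⊤ : ℕ∞)
        (fun q => ∑ m, eps5 i k l m p * omg5 Θ i k q * omg5 Θ l m q) :=
      fun i k l => ContDiff.sum (fun m _ => hterm i k l m)
    have hs2 : ∀ i k : Fin 5, ContDiff ℝ (⊤ : ℕ∞)
        (fun q => ∑ l, ∑ m, eps5 i k l m p * omg5 Θ i k q * omg5 Θ l m q) :=
      fun i k => ContDiff.sum (fun l _ => hs3 i k l)
    have hs1 : ∀ i : Fin 5, ContDiff ℝ (⊤ : ℕ∞)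
        (fun q => ∑ k, ∑ l, ∑ m, eps5 i k l m p * omg5 Θ i k q * omg5 Θ l m q) :=
      fun i => ContDiff.sum (fun k _ => hs2 i k)
    have e1 : pd a (Hfun Θ p) q = ∑ i, pd a
        (fun q => ∑ k, ∑ l, ∑ m, eps5 i k l m p * omg5 Θ i k q * omg5 Θ l m q) q :=
      pd_sum a _ (fun i => dAt (hs1 i) q)
    rw [e1]
    refine Finset.sum_congr rfl fun i _ => ?_
    have e2 := pd_sum a (fun k q => ∑ l, ∑ m, eps5 i k l m p * omg5 Θ i k q * omg5 Θ l m q)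
      (fun k => dAt (hs2 i k) q)
    rw [e2]
    refine Finset.sum_congr rfl fun k _ => ?_
    have e3 := pd_sum a (fun l q => ∑ m, eps5 i k l m p * omg5 Θ i k q * omg5 Θ l m q)
      (fun l => dAt (hs3 i k l) q)
    rw [e3]
    refine Finset.sum_congr rfl fun l _ => ?_
    have e4 := pd_sum a (fun m q => eps5 i k l m p * omg5 Θ i k q * omg5 Θ l m q)
      (fun m => dAt (hterm i k l m) q)
    rw [e4]
    refine Finset.sum_congr rfl fun m _ => ?_
    have h1 : DifferentiableAt ℝ (fun q => eps5 i k l m p * omg5 Θ i k q) q :=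
      dAt (contDiff_const.mul (hω i k)) q
    have h2 : DifferentiableAt ℝ (omg5 Θ l m) q := dAt (hω l m) q
    have e5 := pd_mul a h1 h2
    beta_reduce at e5
    rw [e5, pd_const_mul a _ (dAt (hω i k) q)]
    ring
  -- decomposition of derivatives of ω
  have hsubX : ∀ a b c : Fin 5, px5 a (omg5 Θ b c) pt
      = pd (Xc a) (pd (Xc b) (py5 c Θ)) pt - pd (Xc a) (pd (Xc c) (py5 b Θ)) pt := by
    intro a b c
    exact pd_sub (Xc a) (dAt (hXY b c) pt) (dAt (hXY c b) pt)
  have hsubY : ∀ a b c : Fin 5, py5 a (omg5 Θ b c) pt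
      = pd (Yc a) (pd (Xc b) (py5 c Θ)) pt - pd (Yc a) (pd (Xc c) (py5 b Θ)) pt := by
    intro a b c
    exact pd_sub (Yc a) (dAt (hXY b c) pt) (dAt (hXY c b) pt)
  -- closedness in x
  have hcX : ∀ p i k : Fin 5,
      px5 p (omg5 Θ i k) pt + px5 i (omg5 Θ k p) pt + px5 k (omg5 Θ p i) pt = 0 := by
    intro p i k
    rw [hsubX p i k, hsubX i k p, hsubX k p i]
    linear_combination pd_comm (Xc p) (Xc i) (hY k) pt - pd_comm (Xc p) (Xc k) (hY i) pt
      + pd_comm (Xc i) (Xc k) (hY p) pt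
  -- closedness in y
  have hswap : ∀ a c : Fin 5, pd (Yc a) (py5 c Θ) = pd (Yc c) (py5 a Θ) :=
    fun a c => funext fun q => pd_comm (Yc a) (Yc c) hΘ q
  have hFE : ∀ a b c : Fin 5, pd (Yc a) (pd (Xc b) (py5 c Θ)) pt
      = pd (Xc b) (pd (Yc a) (py5 c Θ)) pt := fun a b c => pd_comm (Yc a) (Xc b) (hY c) pt
  have hcY : ∀ p i k : Fin 5,
      py5 p (omg5 Θ i k) pt + py5 i (omg5 Θ k p) pt + py5 k (omg5 Θ p i) pt = 0 := by
    intro p i k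
    rw [hsubY p i k, hsubY i k p, hsubY k p i,
      hFE p i k, hFE p k i, hFE i k p, hFE i p k, hFE k p i, hFE k i p,
      hswap p k, hswap i p, hswap k i]
    ring
  constructor
  · have hx1 : ∑ p : Fin 5, px5 p (Hfun Θ p) pt
        = ∑ p : Fin 5, ∑ i, ∑ k, ∑ l, ∑ m, eps5 i k l m p *
          (px5 p (omg5 Θ i k) pt * omg5 Θ l m pt + omg5 Θ i k pt * px5 p (omg5 Θ l m) pt) :=
      Finset.sum_congr rfl fun p _ => hderivH (Xc p) p pt
    rw [hx1]
    exact key5 (fun l m => omg5 Θ l m pt) (fun a b c => px5 a (omg5 Θ b c) pt) hcX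
  · have hy1 : ∑ p : Fin 5, py5 p (Hfun Θ p) pt
        = ∑ p : Fin 5, ∑ i, ∑ k, ∑ l, ∑ m, eps5 i k l m p *
          (py5 p (omg5 Θ i k) pt * omg5 Θ l m pt + omg5 Θ i k pt * py5 p (omg5 Θ l m) pt) :=
      Finset.sum_congr rfl fun p _ => hderivH (Yc p) p pt
    rw [hy1]
    exact key5 (fun l m => omg5 Θ l m pt) (fun a b c => py5 a (omg5 Θ b c) pt) hcY
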